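/- Let E, F, H, G₁, G₂, G₃ be real normed vector spaces, let L ≥ 1, and let f₀, …, f_L : E → F be functions each differentiable at a point x ∈ E. Let B : F → H, A : H → H, C : H → G₁, and T : G₂ → G₂ be continuous linear maps with operator norm ‖A‖ ≤ 1. Let σ_SSM : G₁ → G₂ be differentiable everywhere with ‖Dσ_SSM(z)‖ ≤ μ_SSM for all z, and let σ_MIX : G₂ → G₃ be differentiable everywhere with ‖Dσ_MIX(z)‖ ≤ μ_MIX for all z, where μ_SSM, μ_MIX ≥ 0. For t ∈ {L−1, L} define α_t : E → G₁ by α_t(x) = C(Σ_{k=0}^{t} A^k(B(f_{t−k}(x)))), and define y : E → G₃ by y(x) = σ_MIX(σ_SSM(α_L(x)) + T(σ_SSM(α_{L−1}(x)))). Then, with γ = μ_MIX · μ_SSM · ‖B‖ · ‖C‖, the Fréchet derivative of y at x satisfies ‖Dy(x)‖ ≤ γ · Σ_{k=0}^{L} ‖Df_k(x)‖ + γ · ‖T‖ · Σ_{k=0}^{L−1} ‖Df_k(x)‖. -/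

import Mathlib

open Finset

/-- Local sensitivity for a 1-block LGSM of sequence length `L` with graph mixing:
with `α_t x = C (∑_{k=0}^t A^k (B (f (t-k) x)))` for `t ∈ {L-1, L}` and
`y x = σ_MIX (σ_SSM (α_L x) + T (σ_SSM (α_{L-1} x)))`, we have
`‖Dy(x)‖ ≤ γ ∑_{k=0}^L ‖Df_k(x)‖ + γ‖T‖ ∑_{k=0}^{L-1} ‖Df_k(x)‖`
where `γ = μ_MIX · μ_SSM · ‖B‖ · ‖C‖`. -/
theorem lgsm_one_block_sensitivity
    {E F H G₁ G₂ G₃ : Type*}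
    [NormedAddCommGroup E] [NormedSpace ℝ E]
    [NormedAddCommGroup F] [NormedSpace ℝ F]
    [NormedAddCommGroup H] [NormedSpace ℝ H]
    [NormedAddCommGroup G₁] [NormedSpace ℝ G₁]
    [NormedAddCommGroup G₂] [NormedSpace ℝ G₂]
    [NormedAddCommGroup G₃] [NormedSpace ℝ G₃]
    (L : ℕ) (hL : 1 ≤ L) (f : ℕ → E → F) (x : E)
    (hf : ∀ k ≤ L, DifferentiableAt ℝ (f k) x)
    (B : F →L[ℝ] H) (A : H →L[ℝ] H) (C : H →L[ℝ] G₁) (T : G₂ →L[ℝ] G₂)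
    (hA : ‖A‖ ≤ 1)
    (μSSM μMIX : ℝ) (hμSSM : 0 ≤ μSSM) (hμMIX : 0 ≤ μMIX)
    (σSSM : G₁ → G₂) (hσSSM : Differentiable ℝ σSSM)
    (hσSSMμ : ∀ z : G₁, ‖fderiv ℝ σSSM z‖ ≤ μSSM)
    (σMIX : G₂ → G₃) (hσMIX : Differentiable ℝ σMIX)
    (hσMIXμ : ∀ z : G₂, ‖fderiv ℝ σMIX z‖ ≤ μMIX)
    (α : ℕ → E → G₁)
    (hα : ∀ t : ℕ, ∀ x' : E,
      α t x' = C (∑ k ∈ Finset.range (t + 1), (A ^ k) (B (f (t - k) x'))))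
    (y : E → G₃)
    (hy : ∀ x' : E, y x' = σMIX (σSSM (α L x') + T (σSSM (α (L - 1) x')))) :
    ‖fderiv ℝ y x‖ ≤
      (μMIX * μSSM * ‖B‖ * ‖C‖) * ∑ k ∈ Finset.range (L + 1), ‖fderiv ℝ (f k) x‖
      + (μMIX * μSSM * ‖B‖ * ‖C‖) * ‖T‖ * ∑ k ∈ Finset.range L, ‖fderiv ℝ (f k) x‖ := by
  set φ : ℕ → F →L[ℝ] G₁ := fun k => C.comp ((A ^ k).comp B) with hφ
  have hφn : ∀ k : ℕ, ‖φ k‖ ≤ ‖C‖ * ‖B‖ := by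
    intro k
    have hAk : ‖A ^ k‖ ≤ 1 := by
      rcases Nat.eq_zero_or_pos k with hk | hk
      · subst hk; rw [pow_zero]; exact ContinuousLinearMap.norm_id_le
      · calc ‖A ^ k‖ ≤ ‖A‖ ^ k := norm_pow_le' A hk
          _ ≤ 1 ^ k := pow_le_pow_left₀ (norm_nonneg _) hA k
          _ = 1 := one_pow k
    calc ‖φ k‖ ≤ ‖C‖ * ‖(A ^ k).comp B‖ := ContinuousLinearMap.opNorm_comp_le _ _
      _ ≤ ‖C‖ * (‖A ^ k‖ * ‖B‖) :=
          mul_le_mul_of_nonneg_left (ContinuousLinearMap.opNorm_comp_le _ _) (norm_nonneg _)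
      _ ≤ ‖C‖ * (1 * ‖B‖) := by
          apply mul_le_mul_of_nonneg_left _ (norm_nonneg _)
          exact mul_le_mul_of_nonneg_right hAk (norm_nonneg _)
      _ = ‖C‖ * ‖B‖ := by ring
  -- derivative of α t for t ≤ L
  have hαD : ∀ t ≤ L,
      HasFDerivAt (α t)
        (∑ k ∈ Finset.range (t + 1), (φ k).comp (fderiv ℝ (f (t - k)) x)) x := by
    intro t ht
    have heq : α t = fun x' => ∑ k ∈ Finset.range (t + 1), (φ k) (f (t - k) x') := by
      funext x'
      rw [hα t x', map_sum]
      simp [hφ]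
    rw [heq]
    exact HasFDerivAt.fun_sum fun k _ =>
      ((φ k).hasFDerivAt.comp x (hf (t - k) (le_trans (Nat.sub_le _ _) ht)).hasFDerivAt)
  have hαn : ∀ t ≤ L,
      ‖fderiv ℝ (α t) x‖ ≤ ‖C‖ * ‖B‖ * ∑ k ∈ Finset.range (t + 1), ‖fderiv ℝ (f k) x‖ := by
    intro t ht
    rw [(hαD t ht).fderiv]
    calc ‖∑ k ∈ Finset.range (t + 1), (φ k).comp (fderiv ℝ (f (t - k)) x)‖
        ≤ ∑ k ∈ Finset.range (t + 1), ‖(φ k).comp (fderiv ℝ (f (t - k)) x)‖ :=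
          norm_sum_le _ _
      _ ≤ ∑ k ∈ Finset.range (t + 1), ‖C‖ * ‖B‖ * ‖fderiv ℝ (f (t - k)) x‖ := by
          apply Finset.sum_le_sum
          intro k _
          calc ‖(φ k).comp (fderiv ℝ (f (t - k)) x)‖
              ≤ ‖φ k‖ * ‖fderiv ℝ (f (t - k)) x‖ := ContinuousLinearMap.opNorm_comp_le _ _
            _ ≤ ‖C‖ * ‖B‖ * ‖fderiv ℝ (f (t - k)) x‖ :=
                mul_le_mul_of_nonneg_right (hφn k) (norm_nonneg _)
      _ = ‖C‖ * ‖B‖ * ∑ k ∈ Finset.range (t + 1), ‖fderiv ℝ (f (t - k)) x‖ := by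
          rw [Finset.mul_sum]
      _ = ‖C‖ * ‖B‖ * ∑ k ∈ Finset.range (t + 1), ‖fderiv ℝ (f k) x‖ := by
        congr 1
        have := Finset.sum_range_reflect (fun j => ‖fderiv ℝ (f j) x‖) (t + 1)
        simpa using this
  -- inner function g
  set g : E → G₂ := fun x' => σSSM (α L x') + T (σSSM (α (L - 1) x')) with hg
  have hαLd : DifferentiableAt ℝ (α L) x := (hαD L le_rfl).differentiableAt
  have hαL1d : DifferentiableAt ℝ (α (L - 1)) x :=
    (hαD (L - 1) (Nat.sub_le _ _)).differentiableAt
  have hDg : HasFDerivAt g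
      (((fderiv ℝ σSSM (α L x)).comp (fderiv ℝ (α L) x)) +
        (T.comp (fderiv ℝ σSSM (α (L - 1) x))).comp (fderiv ℝ (α (L - 1)) x)) x := by
    have h1 : HasFDerivAt (fun x' => σSSM (α L x'))
        ((fderiv ℝ σSSM (α L x)).comp (fderiv ℝ (α L) x)) x :=
      ((hσSSM (α L x)).hasFDerivAt).comp x hαLd.hasFDerivAt
    have h2 : HasFDerivAt (fun x' => T (σSSM (α (L - 1) x')))
        ((T.comp (fderiv ℝ σSSM (α (L - 1) x))).comp (fderiv ℝ (α (L - 1)) x)) x := by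
      have := (T.hasFDerivAt.comp (α (L-1) x) (hσSSM (α (L-1) x)).hasFDerivAt).comp x
        hαL1d.hasFDerivAt
      exact this
    exact h1.add h2
  have hDy : HasFDerivAt y
      ((fderiv ℝ σMIX (g x)).comp
        (((fderiv ℝ σSSM (α L x)).comp (fderiv ℝ (α L) x)) +
          (T.comp (fderiv ℝ σSSM (α (L - 1) x))).comp (fderiv ℝ (α (L - 1)) x))) x := by
    have heq : y = fun x' => σMIX (g x') := by funext x'; rw [hy x', hg]
    rw [heq]
    exact ((hσMIX (g x)).hasFDerivAt).comp x hDg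
  rw [hDy.fderiv]
  have hL1 : L - 1 + 1 = L := Nat.succ_pred_eq_of_pos hL
  have SL := hαn L le_rfl
  have SL1 : ‖fderiv ℝ (α (L - 1)) x‖ ≤ ‖C‖ * ‖B‖ * ∑ k ∈ Finset.range L, ‖fderiv ℝ (f k) x‖ := by
    have := hαn (L - 1) (Nat.sub_le _ _)
    rwa [hL1] at this
  have hsum1 : (0:ℝ) ≤ ∑ k ∈ Finset.range (L + 1), ‖fderiv ℝ (f k) x‖ :=
    Finset.sum_nonneg fun _ _ => norm_nonneg _
  have hsum2 : (0:ℝ) ≤ ∑ k ∈ Finset.range L, ‖fderiv ℝ (f k) x‖ :=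
    Finset.sum_nonneg fun _ _ => norm_nonneg _
  have hmix := hσMIXμ (g x)
  have hs1 := hσSSMμ (α L x)
  have hs2 := hσSSMμ (α (L - 1) x)
  have hinner : ‖((fderiv ℝ σSSM (α L x)).comp (fderiv ℝ (α L) x)) +
      (T.comp (fderiv ℝ σSSM (α (L - 1) x))).comp (fderiv ℝ (α (L - 1)) x)‖ ≤
      μSSM * (‖C‖ * ‖B‖ * ∑ k ∈ Finset.range (L + 1), ‖fderiv ℝ (f k) x‖)
        + ‖T‖ * μSSM * (‖C‖ * ‖B‖ * ∑ k ∈ Finset.range L, ‖fderiv ℝ (f k) x‖) := by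
    refine le_trans (norm_add_le _ _) (add_le_add ?_ ?_)
    · calc ‖(fderiv ℝ σSSM (α L x)).comp (fderiv ℝ (α L) x)‖
          ≤ ‖fderiv ℝ σSSM (α L x)‖ * ‖fderiv ℝ (α L) x‖ :=
            ContinuousLinearMap.opNorm_comp_le _ _
        _ ≤ μSSM * (‖C‖ * ‖B‖ * ∑ k ∈ Finset.range (L + 1), ‖fderiv ℝ (f k) x‖) :=
            mul_le_mul hs1 SL (norm_nonneg _) hμSSM
    · calc ‖(T.comp (fderiv ℝ σSSM (α (L - 1) x))).comp (fderiv ℝ (α (L - 1)) x)‖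
          ≤ ‖T.comp (fderiv ℝ σSSM (α (L - 1) x))‖ * ‖fderiv ℝ (α (L - 1)) x‖ :=
            ContinuousLinearMap.opNorm_comp_le _ _
        _ ≤ (‖T‖ * μSSM) * (‖C‖ * ‖B‖ * ∑ k ∈ Finset.range L, ‖fderiv ℝ (f k) x‖) := by
            apply mul_le_mul _ SL1 (norm_nonneg _) (by positivity)
            exact le_trans (ContinuousLinearMap.opNorm_comp_le _ _)
              (mul_le_mul_of_nonneg_left hs2 (norm_nonneg _))
        _ = ‖T‖ * μSSM * (‖C‖ * ‖B‖ * ∑ k ∈ Finset.range L, ‖fderiv ℝ (f k) x‖) := rfl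
  calc ‖(fderiv ℝ σMIX (g x)).comp _‖
      ≤ ‖fderiv ℝ σMIX (g x)‖ * _ := ContinuousLinearMap.opNorm_comp_le _ _
    _ ≤ μMIX * (μSSM * (‖C‖ * ‖B‖ * ∑ k ∈ Finset.range (L + 1), ‖fderiv ℝ (f k) x‖)
        + ‖T‖ * μSSM * (‖C‖ * ‖B‖ * ∑ k ∈ Finset.range L, ‖fderiv ℝ (f k) x‖)) :=
        mul_le_mul hmix hinner (norm_nonneg _) hμMIX
    _ = (μMIX * μSSM * ‖B‖ * ‖C‖) * ∑ k ∈ Finset.range (L + 1), ‖fderiv ℝ (f k) x‖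
        + (μMIX * μSSM * ‖B‖ * ‖C‖) * ‖T‖ * ∑ k ∈ Finset.range L, ‖fderiv ℝ (f k) x‖ := by
        ring
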